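/- Let G be a chordal graph with clique tree T = (K_G, E_T), where K_G is the set of maximal cliques. Suppose (φ_i)_{i∈V} satisfies φ_i > 0 and ∑_{i∈K} φ_i < 1 for every maximal clique K. Define F(φ) = −∑_i φ_i ln ν_i + ∑_i φ_i ln φ_i − ∑_{(K,K')∈E_T} (1−∑_{s∈K∩K'} φ_s) ln(1−∑_{s∈K∩K'} φ_s) + ∑_{K∈K_G} (1−∑_{s∈K} φ_s) ln(1−∑_{s∈K} φ_s). Then ∂F/∂φ_i = 0 for all i if and only if ν_i = φ_i · [∏_{(K,K')∈E_T: i∈K∩K'} (1−∑_{s∈K∩K'} φ_s)] / [∏_{K∈K_G: i∈K} (1−∑_{s∈K} φ_s)] for all i. -/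

import Mathlib

open Finset

variable {V : Type*} [Fintype V] [DecidableEq V]

/-- The separator `K ∩ K'` associated with an unordered pair of cliques. -/
def sep {KG : Finset (Finset V)} (e : Sym2 {K // K ∈ KG}) : Finset V :=
  Sym2.lift ⟨fun a b => a.val ∩ b.val, fun a b => Finset.inter_comm _ _⟩ e

/-- The chordal region-based free energy under clique belief: counting number `+1` on
maximal cliques, `-1` on clique-tree edge separators. -/
noncomputable def chordalF (ν : V → ℝ) (KG : Finset (Finset V))
    (T : SimpleGraph {K // K ∈ KG}) [DecidableRel T.Adj] (φ : V → ℝ) : ℝ :=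
  -∑ i, φ i * Real.log (ν i) + ∑ i, φ i * Real.log (φ i)
    - ∑ e ∈ T.edgeFinset, (1 - ∑ s ∈ sep e, φ s) * Real.log (1 - ∑ s ∈ sep e, φ s)
    + ∑ K ∈ KG, (1 - ∑ s ∈ K, φ s) * Real.log (1 - ∑ s ∈ K, φ s)

lemma sep_mk {KG : Finset (Finset V)} (a b : {K // K ∈ KG}) :
    sep (s(a, b)) = a.val ∩ b.val := rfl

/-- The sum over any separator is less than 1. -/
lemma sep_sum_lt_one {KG : Finset (Finset V)} (φ : V → ℝ) (hφ : ∀ j, 0 ≤ φ j)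
    (hcl : ∀ K ∈ KG, ∑ s ∈ K, φ s < 1) (e : Sym2 {K // K ∈ KG}) :
    ∑ s ∈ sep e, φ s < 1 := by
  induction e using Sym2.ind with
  | _ a b =>
    rw [sep_mk]
    calc ∑ s ∈ a.val ∩ b.val, φ s ≤ ∑ s ∈ a.val, φ s :=
          Finset.sum_le_sum_of_subset_of_nonneg (Finset.inter_subset_left)
            (fun j _ _ => hφ j)
      _ < 1 := hcl a.val a.property

lemma hasDerivAt_sum_upd (φ : V → ℝ) (i : V) (A : Finset V) (t₀ : ℝ) :
    HasDerivAt (fun t => ∑ s ∈ A, Function.update φ i t s)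
      (if i ∈ A then 1 else 0) t₀ := by
  by_cases h : i ∈ A
  · have heq : (fun t => ∑ s ∈ A, Function.update φ i t s)
        = fun t => t + ∑ s ∈ A \ {i}, φ s := by
      funext t; exact Finset.sum_update_of_mem h _ _
    rw [heq, if_pos h]
    exact (hasDerivAt_id t₀).add_const _
  · have heq : (fun t => ∑ s ∈ A, Function.update φ i t s)
        = fun _ => ∑ s ∈ A, φ s := by
      funext t; exact Finset.sum_update_of_notMem h _ _
    rw [heq, if_neg h]
    exact hasDerivAt_const _ _

lemma hasDerivAt_one_sub_mul_log {x : ℝ} (hx : x < 1) :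
    HasDerivAt (fun y => (1 - y) * Real.log (1 - y))
      (-(Real.log (1 - x) + 1)) x := by
  have h1 : HasDerivAt (fun y : ℝ => 1 - y) (-1) x := by
    simpa using (hasDerivAt_id x).const_sub 1
  have h2 := (Real.hasDerivAt_mul_log (x := 1 - x) (by linarith)).comp x h1
  refine h2.congr_deriv ?_
  ring

lemma hasDerivAt_term (φ : V → ℝ) (i : V) (A : Finset V) (hA : ∑ s ∈ A, φ s < 1) :
    HasDerivAt (fun t => (1 - ∑ s ∈ A, Function.update φ i t s) *
        Real.log (1 - ∑ s ∈ A, Function.update φ i t s))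
      (if i ∈ A then -(Real.log (1 - ∑ s ∈ A, φ s) + 1) else 0) (φ i) := by
  have hupd : ∑ s ∈ A, Function.update φ i (φ i) s = ∑ s ∈ A, φ s := by
    rw [Function.update_eq_self]
  have hS := hasDerivAt_sum_upd φ i A (φ i)
  have h2 := (hasDerivAt_one_sub_mul_log
      (x := ∑ s ∈ A, Function.update φ i (φ i) s) (by rw [hupd]; exact hA)).comp (φ i) hS
  rw [hupd] at h2
  refine h2.congr_deriv ?_
  by_cases h : i ∈ A <;> simp [h]

lemma chordalF_hasDerivAt (ν : V → ℝ) (KG : Finset (Finset V))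
    (T : SimpleGraph {K // K ∈ KG}) [DecidableRel T.Adj] (φ : V → ℝ)
    (i : V) (hφi : φ i ≠ 0) (hφ0 : ∀ j, 0 ≤ φ j)
    (hcl : ∀ K ∈ KG, ∑ s ∈ K, φ s < 1) :
    HasDerivAt (fun t => chordalF ν KG T (Function.update φ i t))
      (-Real.log (ν i) + (Real.log (φ i) + 1)
        - ∑ e ∈ T.edgeFinset,
            (if i ∈ sep e then -(Real.log (1 - ∑ s ∈ sep e, φ s) + 1) else 0)
        + ∑ K ∈ KG,
            (if i ∈ K then -(Real.log (1 - ∑ s ∈ K, φ s) + 1) else 0)) (φ i) := by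
  have hA : HasDerivAt (fun t => ∑ j, Function.update φ i t j * Real.log (ν j))
      (Real.log (ν i)) (φ i) := by
    have heq : (fun t => ∑ j, Function.update φ i t j * Real.log (ν j))
        = fun t => t * Real.log (ν i) + ∑ j ∈ Finset.univ \ {i}, φ j * Real.log (ν j) := by
      funext t
      rw [← Finset.sum_update_of_mem (Finset.mem_univ i)
        (f := fun j => φ j * Real.log (ν j))]
      refine Finset.sum_congr rfl fun j _ => ?_
      by_cases h : j = i <;> simp [h, Function.update_apply]
    rw [heq]
    simpa using ((hasDerivAt_id (φ i)).mul_const (Real.log (ν i))).add_const (∑ j ∈ Finset.univ \ {i}, φ j * Real.log (ν j))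
  have hB : HasDerivAt (fun t => ∑ j, Function.update φ i t j *
      Real.log (Function.update φ i t j)) (Real.log (φ i) + 1) (φ i) := by
    have heq : (fun t => ∑ j, Function.update φ i t j * Real.log (Function.update φ i t j))
        = fun t => t * Real.log t + ∑ j ∈ Finset.univ \ {i}, φ j * Real.log (φ j) := by
      funext t
      rw [← Finset.sum_update_of_mem (Finset.mem_univ i)
        (f := fun j => φ j * Real.log (φ j))]
      refine Finset.sum_congr rfl fun j _ => ?_
      by_cases h : j = i <;> simp [h, Function.update_apply]
    rw [heq]
    exact (Real.hasDerivAt_mul_log hφi).add_const _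
  have hC : HasDerivAt (fun t => ∑ e ∈ T.edgeFinset,
      (1 - ∑ s ∈ sep e, Function.update φ i t s) *
        Real.log (1 - ∑ s ∈ sep e, Function.update φ i t s))
      (∑ e ∈ T.edgeFinset,
        (if i ∈ sep e then -(Real.log (1 - ∑ s ∈ sep e, φ s) + 1) else 0)) (φ i) :=
    HasDerivAt.fun_sum (fun e _ => hasDerivAt_term φ i (sep e)
      (sep_sum_lt_one φ hφ0 hcl e))
  have hD : HasDerivAt (fun t => ∑ K ∈ KG,
      (1 - ∑ s ∈ K, Function.update φ i t s) *
        Real.log (1 - ∑ s ∈ K, Function.update φ i t s))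
      (∑ K ∈ KG,
        (if i ∈ K then -(Real.log (1 - ∑ s ∈ K, φ s) + 1) else 0)) (φ i) :=
    HasDerivAt.fun_sum (fun K hK => hasDerivAt_term φ i K (hcl K hK))
  exact ((hA.neg.add hB).sub hC).add hD

lemma card_filter_eq {KG : Finset (Finset V)} (T : SimpleGraph {K // K ∈ KG})
    [DecidableRel T.Adj] (hT : T.IsTree) (i : V)
    (hsub : (T.induce {K : {K // K ∈ KG} | i ∈ K.val}).Connected) :
    (KG.filter (fun K => i ∈ K)).card
      = (T.edgeFinset.filter (fun e => i ∈ sep e)).card + 1 := by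
  classical
  set S : Set {K // K ∈ KG} := {K : {K // K ∈ KG} | i ∈ K.val} with hS
  have hac : (T.induce S).IsAcyclic := by
    intro v p hp
    exact hT.IsAcyclic _
      ((SimpleGraph.Walk.map_isCycle_iff_of_injective
        (f := (SimpleGraph.Embedding.induce S).toHom) Subtype.val_injective).2 hp)
  have htree : (T.induce S).IsTree := ⟨hsub, hac⟩
  have hcard := htree.card_edgeFinset
  have h1 : Fintype.card ↥S = (KG.filter (fun K => i ∈ K)).card := by
    rw [← Set.toFinset_card]
    refine Finset.card_bij (fun K _ => K.val) ?_ ?_ ?_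
    · intro a ha
      rw [Set.mem_toFinset] at ha
      exact Finset.mem_filter.2 ⟨a.property, ha⟩
    · intro a _ b _ hab
      exact Subtype.ext hab
    · intro K hK
      rw [Finset.mem_filter] at hK
      exact ⟨⟨K, hK.1⟩, Set.mem_toFinset.2 hK.2, rfl⟩
  have h2 : (T.induce S).edgeFinset.card
      = (T.edgeFinset.filter (fun e => i ∈ sep e)).card := by
    refine Finset.card_bij (fun e _ => Sym2.map Subtype.val e) ?_ ?_ ?_
    · intro e he
      induction e using Sym2.ind with
      | _ a b =>
        rw [SimpleGraph.mem_edgeFinset, SimpleGraph.mem_edgeSet] at he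
        have hadj : T.Adj a.val b.val := he
        show Sym2.map Subtype.val s(a, b) ∈ T.edgeFinset.filter (fun e => i ∈ sep e)
        rw [Sym2.map_pair_eq]
        refine Finset.mem_filter.2 ⟨?_, ?_⟩
        · rw [SimpleGraph.mem_edgeFinset, SimpleGraph.mem_edgeSet]
          exact hadj
        · rw [sep_mk]
          exact Finset.mem_inter.2 ⟨a.property, b.property⟩
    · intro a _ b _ hab
      exact Sym2.map.injective Subtype.val_injective hab
    · intro e he
      rw [Finset.mem_filter] at he
      obtain ⟨he1, he2⟩ := he
      induction e using Sym2.ind with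
      | _ a b =>
        rw [SimpleGraph.mem_edgeFinset, SimpleGraph.mem_edgeSet] at he1
        rw [sep_mk, Finset.mem_inter] at he2
        refine ⟨s(⟨a, he2.1⟩, ⟨b, he2.2⟩), ?_, ?_⟩
        swap
        · show Sym2.map Subtype.val s((⟨a, he2.1⟩ : ↥S), ⟨b, he2.2⟩) = s(a, b)
          rw [Sym2.map_pair_eq]
        rw [SimpleGraph.mem_edgeFinset, SimpleGraph.mem_edgeSet]
        exact he1
  omega

/-- The gradient of the chordal free energy vanishes at `φ` iff the back-off rates are
given by the exact chordal formula. -/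
theorem chordal_zero_gradient_iff (G : SimpleGraph V) [DecidableRel G.Adj]
    (KG : Finset (Finset V))
    (hKG : ∀ K : Finset V, K ∈ KG ↔ (G.IsClique (K : Set V) ∧
      ∀ K' : Finset V, G.IsClique (K' : Set V) → K ⊆ K' → K' = K))
    (T : SimpleGraph {K // K ∈ KG}) [DecidableRel T.Adj] (hT : T.IsTree)
    (hsub : ∀ v : V, (T.induce {K : {K // K ∈ KG} | v ∈ K.val}).Connected)
    (ν φ : V → ℝ) (hν : ∀ i, 0 < ν i) (hφ : ∀ i, 0 < φ i)
    (hcl : ∀ K ∈ KG, ∑ s ∈ K, φ s < 1) :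
    (∀ i, HasDerivAt (fun t => chordalF ν KG T (Function.update φ i t)) 0 (φ i)) ↔
      ∀ i, ν i = φ i *
        (∏ e ∈ T.edgeFinset.filter (fun e => i ∈ sep e), (1 - ∑ s ∈ sep e, φ s)) /
        ∏ K ∈ KG.filter (fun K => i ∈ K), (1 - ∑ s ∈ K, φ s) := by
  have hφ0 : ∀ j, (0:ℝ) ≤ φ j := fun j => (hφ j).le
  have hsep : ∀ e : Sym2 {K // K ∈ KG}, ∑ s ∈ sep e, φ s < 1 :=
    sep_sum_lt_one φ hφ0 hcl
  refine forall_congr' fun i => ?_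
  have hd := chordalF_hasDerivAt ν KG T φ i (hφ i).ne' hφ0 hcl
  set E := T.edgeFinset.filter (fun e => i ∈ sep e) with hE
  set Kf := KG.filter (fun K => i ∈ K) with hKf
  have hcard : Kf.card = E.card + 1 := card_filter_eq T hT i (hsub i)
  have hP : (0:ℝ) < ∏ e ∈ E, (1 - ∑ s ∈ sep e, φ s) :=
    Finset.prod_pos (fun e _ => by linarith [hsep e])
  have hQ : (0:ℝ) < ∏ K ∈ Kf, (1 - ∑ s ∈ K, φ s) :=
    Finset.prod_pos (fun K hK => by
      have := hcl K (Finset.mem_filter.1 hK).1; linarith)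
  set X : ℝ := φ i * (∏ e ∈ E, (1 - ∑ s ∈ sep e, φ s)) /
      ∏ K ∈ Kf, (1 - ∑ s ∈ K, φ s) with hXdef
  have hX : 0 < X := div_pos (mul_pos (hφ i) hP) hQ
  have hfe : ∑ e ∈ T.edgeFinset,
      (if i ∈ sep e then -(Real.log (1 - ∑ s ∈ sep e, φ s) + 1) else 0)
      = -(∑ e ∈ E, Real.log (1 - ∑ s ∈ sep e, φ s)) - E.card := by
    rw [hE, ← Finset.sum_filter]
    simp only [Finset.sum_neg_distrib, Finset.sum_add_distrib, Finset.sum_const,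
      nsmul_eq_mul, mul_one]
    ring
  have hfk : ∑ K ∈ KG,
      (if i ∈ K then -(Real.log (1 - ∑ s ∈ K, φ s) + 1) else 0)
      = -(∑ K ∈ Kf, Real.log (1 - ∑ s ∈ K, φ s)) - Kf.card := by
    rw [hKf, ← Finset.sum_filter]
    simp only [Finset.sum_neg_distrib, Finset.sum_add_distrib, Finset.sum_const,
      nsmul_eq_mul, mul_one]
    ring
  have hlogX : Real.log X = Real.log (φ i)
      + ∑ e ∈ E, Real.log (1 - ∑ s ∈ sep e, φ s)
      - ∑ K ∈ Kf, Real.log (1 - ∑ s ∈ K, φ s) := by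
    rw [hXdef, Real.log_div (mul_pos (hφ i) hP).ne' hQ.ne',
      Real.log_mul (hφ i).ne' hP.ne',
      Real.log_prod (fun e _ => (by linarith [hsep e] : (0:ℝ) < _).ne'),
      Real.log_prod (fun K hK => by
        have := hcl K (Finset.mem_filter.1 hK).1; exact (by linarith : (0:ℝ) < _).ne')]
  have hcardR : (Kf.card : ℝ) = (E.card : ℝ) + 1 := by exact_mod_cast hcard
  have hiff : (-Real.log (ν i) + (Real.log (φ i) + 1)
      - ∑ e ∈ T.edgeFinset,
          (if i ∈ sep e then -(Real.log (1 - ∑ s ∈ sep e, φ s) + 1) else 0)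
      + ∑ K ∈ KG,
          (if i ∈ K then -(Real.log (1 - ∑ s ∈ K, φ s) + 1) else 0)) = 0
      ↔ Real.log (ν i) = Real.log X := by
    rw [hfe, hfk, hlogX]
    constructor <;> intro h <;> linarith
  constructor
  · intro h
    exact Real.log_injOn_pos (Set.mem_Ioi.2 (hν i)) (Set.mem_Ioi.2 hX)
      (hiff.1 (hd.unique h))
  · intro h
    have h0 := hiff.2 (by rw [h])
    rw [h0] at hd
    exact hd
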